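/- Let σ > 0, D > 0, μ > 0 with μ ≠ σ/D, and let N : ℝ → ℝ be a C² function satisfying σN'(z) + DN''(z) = ρ(z)N(z), where 0 ≤ ρ(z)N(z) ≤ Ce^{−μz} for all z, N(z) → 1 and N'(z) → 0 as z → +∞. Then there is a constant C' > 0 such that |N(z) − 1| ≤ C'(e^{−(σ/D)z} + e^{−μz}) for all z ≥ 0. -/

import Mathlib

open Real intervalIntegral

private lemma expDeriv (c s : ℝ) :
    HasDerivAt (fun x => Real.exp (c*x)) (c * Real.exp (c*s)) s := by
  have h := (Real.hasDerivAt_exp (c*s)).comp s ((hasDerivAt_id s).const_mul c)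
  simpa [mul_comm, Function.comp_def] using h

private lemma expDeriv' (c : ℝ) (hc : c ≠ 0) (s : ℝ) :
    HasDerivAt (fun x => Real.exp (c*x)/c) (Real.exp (c*s)) s := by
  have h := (expDeriv c s).div_const c
  simpa [mul_div_assoc, mul_div_cancel_left₀ _ hc] using h

private lemma expCont (c : ℝ) : Continuous (fun x => Real.exp (c*x)) := by
  fun_prop

private lemma intExp (c : ℝ) (hc : c ≠ 0) (a b : ℝ) :
    ∫ s in a..b, Real.exp (c*s) = Real.exp (c*b)/c - Real.exp (c*a)/c :=
  intervalIntegral.integral_eq_sub_of_hasDerivAt (fun s _ => expDeriv' c hc s)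
    ((expCont c).intervalIntegrable a b)

private lemma sumBound (K a b c d e f : ℝ) (hK : 0 ≤ K) (ha : 0 < a) (hm : 0 < f)
    (e1 : 0 ≤ b) (e2 : 0 ≤ d) :
    K * (-(b / a) - -(c / a) + (-(d / f) - -(e / f))) ≤ K / a * c + K / f * e := by
  have h : K * (-(b / a) - -(c / a) + (-(d / f) - -(e / f)))
      = K / a * c + K / f * e - (K * (b/a) + K * (d/f)) := by ring
  rw [h]
  linarith [mul_nonneg hK (div_nonneg e1 ha.le), mul_nonneg hK (div_nonneg e2 hm.le)]

/-- Exponential convergence of the nutrient profile N to 1 at +∞. -/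
theorem stmt6 (σ D μ C : ℝ) (hσ : 0 < σ) (hD : 0 < D) (hμ : 0 < μ)
    (hμσ : μ ≠ σ / D) (hC : 0 < C)
    (N ρ : ℝ → ℝ) (hN : ContDiff ℝ 2 N)
    (heq : ∀ z : ℝ, σ * deriv N z + D * deriv (deriv N) z = ρ z * N z)
    (hρN : ∀ z : ℝ, 0 ≤ ρ z * N z ∧ ρ z * N z ≤ C * Real.exp (-μ * z))
    (hlim : Filter.Tendsto N Filter.atTop (nhds 1))
    (hlim' : Filter.Tendsto (deriv N) Filter.atTop (nhds 0)) :
    ∃ C' : ℝ, 0 < C' ∧ ∀ z : ℝ, 0 ≤ z →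
      |N z - 1| ≤ C' * (Real.exp (-(σ/D) * z) + Real.exp (-μ * z)) := by
  set α : ℝ := σ / D with hαdef
  have hα : 0 < α := div_pos hσ hD
  have hD' : D ≠ 0 := ne_of_gt hD
  set c : ℝ := α - μ with hcdef
  have hc : c ≠ 0 := sub_ne_zero.mpr (fun h => hμσ h.symm)
  -- regularity
  rw [show (2 : WithTop ℕ∞) = 1 + 1 from rfl] at hN
  have hd1 : Differentiable ℝ N := (contDiff_succ_iff_deriv.mp hN).1
  have hcd1 : ContDiff ℝ 1 (deriv N) := (contDiff_succ_iff_deriv.mp hN).2.2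
  have hd2 : Differentiable ℝ (deriv N) := (contDiff_one_iff_deriv.mp hcd1).1
  have hcont2 : Continuous (deriv (deriv N)) := (contDiff_one_iff_deriv.mp hcd1).2
  have hcont1 : Continuous (deriv N) := hd2.continuous
  -- continuity of the RHS
  have hfc : Continuous (fun z => ρ z * N z) := by
    have h : (fun z => ρ z * N z) = fun z => σ * deriv N z + D * deriv (deriv N) z :=
      funext fun z => (heq z).symm
    rw [h]
    exact (continuous_const.mul hcont1).add (continuous_const.mul hcont2)
  -- g = e^{αz} N'
  set g : ℝ → ℝ := fun z => Real.exp (α * z) * deriv N z with hgdef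
  have hαD : α * D = σ := div_mul_cancel₀ σ hD'
  have hg : ∀ z, HasDerivAt g (Real.exp (α * z) * (ρ z * N z) / D) z := by
    intro z
    have hdN : HasDerivAt (deriv N) (deriv (deriv N) z) z := (hd2 z).hasDerivAt
    have h := (expDeriv α z).mul hdN
    have key : α * Real.exp (α*z) * deriv N z + Real.exp (α*z) * deriv (deriv N) z
        = Real.exp (α*z) * (ρ z * N z) / D := by
      rw [← heq z, eq_div_iff hD']
      linear_combination Real.exp (α*z) * deriv N z * hαD
    exact key ▸ h
  have hg'cont : Continuous (fun z => Real.exp (α * z) * (ρ z * N z) / D) :=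
    ((expCont α).mul hfc).div_const D
  have hFTC : ∀ z : ℝ, ∫ s in (0:ℝ)..z, Real.exp (α * s) * (ρ s * N s) / D = g z - g 0 :=
    fun z => intervalIntegral.integral_eq_sub_of_hasDerivAt (fun s _ => hg s)
      (hg'cont.intervalIntegrable 0 z)
  -- bound on g for z ≥ 0
  set K2 : ℝ := C / (D * |c|) with hK2def
  have hK2 : 0 < K2 := div_pos hC (mul_pos hD (abs_pos.mpr hc))
  have hgbd : ∀ s : ℝ, 0 ≤ s → |g s| ≤ |g 0| + K2 + K2 * Real.exp (c * s) := by
    intro s hs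
    have hint := hFTC s
    have hnn : 0 ≤ ∫ u in (0:ℝ)..s, Real.exp (α * u) * (ρ u * N u) / D := by
      apply intervalIntegral.integral_nonneg hs
      intro u _
      exact div_nonneg (mul_nonneg (Real.exp_pos _).le (hρN u).1) hD.le
    have hub : (∫ u in (0:ℝ)..s, Real.exp (α * u) * (ρ u * N u) / D)
        ≤ K2 * Real.exp (c*s) + K2 := by
      have h1 : (∫ u in (0:ℝ)..s, Real.exp (α * u) * (ρ u * N u) / D)
          ≤ ∫ u in (0:ℝ)..s, (C/D) * Real.exp (c * u) := by
        apply intervalIntegral.integral_mono_on hs (hg'cont.intervalIntegrable 0 s)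
          ((continuous_const.mul (expCont c)).intervalIntegrable 0 s)
        intro u _
        have h2 := (hρN u).2
        have h4 : Real.exp (α * u) * Real.exp (-μ * u) = Real.exp (c * u) := by
          rw [← Real.exp_add]; congr 1; rw [hcdef]; ring
        have h3 : Real.exp (α * u) * (ρ u * N u) / D
            ≤ Real.exp (α * u) * (C * Real.exp (-μ * u)) / D := by
          gcongr
        refine h3.trans (le_of_eq ?_)
        rw [show Real.exp (α * u) * (C * Real.exp (-μ * u)) / D
            = (C/D) * (Real.exp (α * u) * Real.exp (-μ * u)) from by ring, h4]
        rfl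
      rw [intervalIntegral.integral_const_mul, intExp c hc] at h1
      refine h1.trans ?_
      have h6 : (Real.exp (c*s) - 1)/c ≤ (Real.exp (c*s) + 1)/|c| := by
        calc (Real.exp (c*s) - 1)/c ≤ |(Real.exp (c*s) - 1)/c| := le_abs_self _
          _ = |Real.exp (c*s) - 1|/|c| := abs_div _ _
          _ ≤ (Real.exp (c*s) + 1)/|c| := by
              gcongr
              have := (Real.exp_pos (c*s)).le
              rw [abs_sub_le_iff]; constructor <;> linarith
      have hCD : 0 ≤ C/D := le_of_lt (div_pos hC hD)
      have h7 : Real.exp (c*s)/c - Real.exp (c*0)/c = (Real.exp (c*s) - 1)/c := by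
        norm_num; ring
      rw [h7]
      calc (C/D) * ((Real.exp (c*s) - 1)/c) ≤ (C/D) * ((Real.exp (c*s) + 1)/|c|) :=
            mul_le_mul_of_nonneg_left h6 hCD
        _ = K2 * Real.exp (c*s) + K2 := by rw [hK2def]; field_simp
    have hglo : g 0 ≤ g s := by linarith
    have hghi : g s ≤ g 0 + (K2 * Real.exp (c*s) + K2) := by linarith
    have hprod : 0 ≤ K2 * Real.exp (c*s) := mul_nonneg hK2.le (Real.exp_pos _).le
    rw [abs_le]
    constructor
    · linarith [neg_abs_le (g 0)]
    · linarith [le_abs_self (g 0)]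
  -- bound on N'
  set K : ℝ := |g 0| + 2 * K2 with hKdef
  have hK : 0 < K := by positivity
  have hN'bd : ∀ s : ℝ, 0 ≤ s →
      |deriv N s| ≤ K * (Real.exp (-α * s) + Real.exp (-μ * s)) := by
    intro s hs
    have h7 : deriv N s = Real.exp (-α * s) * g s := by
      rw [hgdef]
      show deriv N s = Real.exp (-α * s) * (Real.exp (α * s) * deriv N s)
      rw [← mul_assoc, ← Real.exp_add]
      norm_num
    have h8 : Real.exp (-α*s) * Real.exp (c*s) = Real.exp (-μ*s) := by
      rw [← Real.exp_add]; congr 1; rw [hcdef]; ring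
    rw [h7, abs_mul, abs_of_pos (Real.exp_pos _)]
    calc Real.exp (-α*s) * |g s|
        ≤ Real.exp (-α*s) * (|g 0| + K2 + K2 * Real.exp (c*s)) :=
          mul_le_mul_of_nonneg_left (hgbd s hs) (Real.exp_pos (-α*s)).le
      _ = (|g 0| + K2) * Real.exp (-α*s) + K2 * (Real.exp (-α*s) * Real.exp (c*s)) := by ring
      _ = (|g 0| + K2) * Real.exp (-α*s) + K2 * Real.exp (-μ*s) := by rw [h8]
      _ ≤ K * (Real.exp (-α * s) + Real.exp (-μ * s)) := by
          rw [hKdef]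
          nlinarith [(Real.exp_pos (-α*s)).le, (Real.exp_pos (-μ*s)).le, hK2.le,
            abs_nonneg (g 0)]
  -- integrate N' from z to T
  have hbd : ∀ z : ℝ, 0 ≤ z → ∀ T : ℝ, z ≤ T →
      |N T - N z| ≤ (K/α) * Real.exp (-α*z) + (K/μ) * Real.exp (-μ*z) := by
    intro z hz T hT
    have hFTC2 : ∫ s in z..T, deriv N s = N T - N z :=
      intervalIntegral.integral_eq_sub_of_hasDerivAt
        (fun s _ => (hd1 s).hasDerivAt) (hcont1.intervalIntegrable z T)
    rw [← hFTC2]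
    refine (intervalIntegral.abs_integral_le_integral_abs hT).trans ?_
    have hmono : (∫ s in z..T, |deriv N s|)
        ≤ ∫ s in z..T, K * (Real.exp (-α * s) + Real.exp (-μ * s)) := by
      apply intervalIntegral.integral_mono_on hT
        (hcont1.abs.intervalIntegrable z T)
        ((continuous_const.mul ((expCont (-α)).add (expCont (-μ)))).intervalIntegrable z T)
      intro s hsmem
      exact hN'bd s (hz.trans hsmem.1)
    refine hmono.trans ?_
    rw [intervalIntegral.integral_const_mul, intervalIntegral.integral_add
      ((expCont (-α)).intervalIntegrable z T) ((expCont (-μ)).intervalIntegrable z T),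
      intExp (-α) (by linarith) z T, intExp (-μ) (by linarith) z T]
    rw [div_neg, div_neg, div_neg, div_neg]
    exact sumBound K α _ _ _ _ μ hK.le hα hμ (Real.exp_pos _).le (Real.exp_pos _).le
  -- take limit T → ∞
  refine ⟨K/α + K/μ + 1, by positivity, fun z hz => ?_⟩
  have htend : Filter.Tendsto (fun T => |N T - N z|) Filter.atTop (nhds |1 - N z|) :=
    ((hlim.sub_const (N z)).abs)
  have hev : ∀ᶠ T in Filter.atTop, |N T - N z|
      ≤ (K/α) * Real.exp (-α*z) + (K/μ) * Real.exp (-μ*z) :=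
    (Filter.eventually_ge_atTop z).mono (fun T hT => hbd z hz T hT)
  have hfin : |1 - N z| ≤ (K/α) * Real.exp (-α*z) + (K/μ) * Real.exp (-μ*z) :=
    le_of_tendsto htend hev
  rw [abs_sub_comm]
  refine hfin.trans ?_
  have hexpa := (Real.exp_pos (-α*z)).le
  have hexpm := (Real.exp_pos (-μ*z)).le
  have hKa : 0 ≤ K/α := by positivity
  have hKm : 0 ≤ K/μ := by positivity
  nlinarith [mul_nonneg hKa hexpm, mul_nonneg hKm hexpa]
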